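/- Let M = M^0 be a yard with w stacks of height h containing blocks 1,…,n, and for i = 1,…,n define: if block i is present in M^{i−1}, let t_i be its stack and B_i the set of blocks located above i in stack t_i (listed top to bottom as the order φ_i), and let M^i be obtained from M^{i−1} by removing block i and all blocks of B_i; if block i is not present in M^{i−1}, set B_i = ∅ and M^i = M^{i−1}. Let M̃^i be M^i with stack t_i deleted, and let G*(M̃^i, B_i, φ_i) be the minimum number of blocking blocks over all capacity-feasible placements of the blocks of B_i on the stacks of M̃^i in the order φ_i (each stack j of M̃^i receiving at most h minus its height blocks; a placed block is blocking if it lies above a smaller block, either a block originally in the stack or an earlier-placed block of B_i). Assume that for each i a capacity-feasible placement of B_i into M̃^i exists. Then every feasible solution of the restricted Block Relocation Problem for M uses at least Σ_{i=1}^n (|B_i| + G*(M̃^i, B_i, φ_i)) reshuffle moves. -/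

import Mathlib

/-- A state of the yard: each of the `w` stacks is a list of blocks, **ordered from top to
bottom** (the head of the list is the topmost block of the stack). -/
abbrev YState (w : ℕ) := Fin w → List ℕ

/-- A move of the Block Relocation Problem: either a reshuffle from stack `src` to stack
`dst`, or the retrieval of the topmost block of stack `src`. -/
inductive BMove (w : ℕ) : Type
  | reshuffle (src dst : Fin w) : BMove w
  | retrieval (src : Fin w) : BMove w

/-- Whether a move is a reshuffle. -/
def BMove.isReshuffle {w : ℕ} : BMove w → Bool
  | .reshuffle _ _ => true
  | .retrieval _ => false

/-- Transition relation of the (unrestricted) BRP with stacks of height `h`: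
a reshuffle moves the topmost block of a non-empty stack `src` on top of a different stack
`dst` of current height `< h`; a retrieval removes the topmost block of `src`, provided it
is the minimum block still present in the yard. -/
inductive BStep {w : ℕ} (h : ℕ) : YState w → BMove w → YState w → Prop
  | reshuffle {S : YState w} (src dst : Fin w) (x : ℕ) (t : List ℕ)
      (hsrc : S src = x :: t) (hne : src ≠ dst) (hcap : (S dst).length < h) :
      BStep h S (.reshuffle src dst)
        (Function.update (Function.update S src t) dst (x :: S dst))
  | retrieval {S : YState w} (src : Fin w) (r : ℕ) (t : List ℕ)
      (hsrc : S src = r :: t) (hmin : ∀ j, ∀ y ∈ S j, r ≤ y) :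
      BStep h S (.retrieval src) (Function.update S src t)

/-- Transition relation of the **restricted** BRP: as `BStep`, but a reshuffle is allowed
only for a block lying, in its stack, above the minimum block `r` still present in the
yard. -/
inductive RStep {w : ℕ} (h : ℕ) : YState w → BMove w → YState w → Prop
  | reshuffle {S : YState w} (src dst : Fin w) (x : ℕ) (t : List ℕ) (r : ℕ)
      (hsrc : S src = x :: t) (hne : src ≠ dst) (hcap : (S dst).length < h)
      (hr : r ∈ t) (hmin : ∀ j, ∀ y ∈ S j, r ≤ y) :
      RStep h S (.reshuffle src dst)
        (Function.update (Function.update S src t) dst (x :: S dst))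
  | retrieval {S : YState w} (src : Fin w) (r : ℕ) (t : List ℕ)
      (hsrc : S src = r :: t) (hmin : ∀ j, ∀ y ∈ S j, r ≤ y) :
      RStep h S (.retrieval src) (Function.update S src t)

/-- `S` is a yard with stacks of height `h` on the blocks `{1, …, n}`: every stack has at
most `h` blocks, and every block `1, …, n` (and no other) occurs exactly once. -/
def IsYard {w : ℕ} (h n : ℕ) (S : YState w) : Prop :=
  (∀ j, (S j).length ≤ h) ∧
    ∀ x : ℕ, (∑ j, (S j).count x) = if x ∈ Finset.Icc 1 n then 1 else 0

/-- The value `σ` of a stack: the minimum block of the list, or `n + 1` (a value larger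
than every block index) for an empty stack. -/
def sigmaVal (n : ℕ) (L : List ℕ) : ℕ := L.foldr min (n + 1)

/-- The list of blocks located above block `i` in stack `j` of the yard `S`
(empty if `i` is not in stack `j`), listed from top to bottom: this is the set `B i`
with its order `φ i`. -/
def aboveList {w : ℕ} (S : YState w) (i : ℕ) (j : Fin w) : List ℕ :=
  if i ∈ S j then (S j).takeWhile (fun y => y != i) else []

/-- Remove block `i` together with all blocks above it from the yard `S` (if `i` is not
present, nothing changes). -/
def peel {w : ℕ} (S : YState w) (i : ℕ) : YState w := fun j =>
  if i ∈ S j then (S j).drop (((S j).takeWhile fun y => y != i).length + 1) else S j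

/-- `peelSeq S i` is the yard `M^i` of the paper: `M^0 = S` and `M^i` is obtained from
`M^(i-1)` by removing block `i` and all blocks above it. -/
def peelSeq {w : ℕ} (S : YState w) : ℕ → YState w
  | 0 => S
  | i + 1 => peel (peelSeq S i) (i + 1)

open Classical in
/-- The number of blocking blocks of the placement that puts the blocks of the list `L`
(in the order of `L`) on the stacks of the yard `Y`, block `L.get p` going to stack `a p`:
a placed block is blocking if it is larger than the value of its stack or larger than an
earlier placed block on the same stack. -/
noncomputable def placeBlockingCount {w : ℕ} (n : ℕ) (Y : YState w) (L : List ℕ)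
    (a : Fin L.length → Fin w) : ℕ :=
  (Finset.univ.filter fun p : Fin L.length =>
    sigmaVal n (Y (a p)) < L.get p ∨ ∃ q, q < p ∧ a q = a p ∧ L.get q < L.get p).card

open Classical in
/-- `G*(Y, L)` over the stacks `A`: the minimum number of blocking blocks over all
capacity-feasible placements of the blocks of `L`, in the order of `L`, on the stacks of
`A` (stack `j` receiving at most `h - (Y j).length` blocks). -/
noncomputable def GstarVal {w : ℕ} (h n : ℕ) (Y : YState w) (A : Finset (Fin w))
    (L : List ℕ) : ℕ :=
  sInf {c : ℕ | ∃ a : Fin L.length → Fin w, (∀ p, a p ∈ A) ∧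
    (∀ j ∈ A,
      (Finset.univ.filter fun p : Fin L.length => a p = j).card ≤ h - (Y j).length) ∧
    c = placeBlockingCount n Y L a}

namespace Eq1LB
open Classical

/-! ### Pure list lemmas -/

theorem split_at_mem {i : ℕ} : ∀ (l : List ℕ), i ∈ l →
    l = l.takeWhile (fun y => y != i) ++ i :: l.drop ((l.takeWhile (fun y => y != i)).length + 1)
  | a :: l, hmem => by
    by_cases hai : a = i
    · subst hai
      simp [List.takeWhile]
    · have : (a != i) = true := by simpa using hai
      have hil : i ∈ l := by
        rcases List.mem_cons.1 hmem with h | h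
        · exact absurd h.symm hai
        · exact h
      have ih := split_at_mem l hil
      simp only [List.takeWhile, this]
      simpa using ih

theorem sigma_lt {n b : ℕ} (hb : b ≤ n + 1) : ∀ {l : List ℕ}, sigmaVal n l < b → ∃ m ∈ l, m < b
  | [], hl => by simp [sigmaVal] at hl; omega
  | a :: l, hl => by
    simp only [sigmaVal, List.foldr_cons] at hl
    rcases min_lt_iff.1 hl with h | h
    · exact ⟨a, List.mem_cons_self, h⟩
    · obtain ⟨m, hm, hmb⟩ := sigma_lt hb (l := l) h
      exact ⟨m, List.mem_cons_of_mem _ hm, hmb⟩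

theorem sublist_of_cons {b m x : ℕ} {l : List ℕ} (h : [b, m].Sublist (x :: l))
    (hbx : b ≠ x) : [b, m].Sublist l := by
  rcases List.sublist_cons_iff.1 h with h' | ⟨r, hr, _⟩
  · exact h'
  · cases hr; exact absurd rfl hbx

/-! ### Counting blocks -/

/-- Total number of occurrences of block `x` in the yard. -/
def cnt {w : ℕ} (Y : YState w) (x : ℕ) : ℕ := ∑ j, (Y j).count x

theorem count_le_cnt {w : ℕ} (Y : YState w) (x : ℕ) (j : Fin w) :
    (Y j).count x ≤ cnt Y x :=
  Finset.single_le_sum (f := fun j => (Y j).count x) (fun _ _ => Nat.zero_le _)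
    (Finset.mem_univ j)

theorem cnt_pos_of_mem {w : ℕ} {Y : YState w} {x : ℕ} {j : Fin w} (h : x ∈ Y j) :
    1 ≤ cnt Y x :=
  le_trans (List.one_le_count_iff.2 h) (count_le_cnt Y x j)

theorem exists_mem_of_cnt_pos {w : ℕ} {Y : YState w} {x : ℕ} (h : 1 ≤ cnt Y x) :
    ∃ j, x ∈ Y j := by
  by_contra hc
  push_neg at hc
  have : cnt Y x = 0 := Finset.sum_eq_zero (fun j _ => by
    simpa [List.count_eq_zero] using hc j)
  omega

theorem stack_unique {w : ℕ} {Y : YState w} {x : ℕ} {j j' : Fin w}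
    (h1 : cnt Y x ≤ 1) (hj : x ∈ Y j) (hj' : x ∈ Y j') : j = j' := by
  by_contra hne
  have : 2 ≤ cnt Y x := by
    have h2 : (Y j).count x + (Y j').count x ≤ cnt Y x := by
      have := Finset.sum_le_sum_of_subset
        (f := fun k => (Y k).count x)
        (Finset.insert_subset_iff.2 ⟨Finset.mem_univ j, Finset.singleton_subset_iff.2 (Finset.mem_univ j')⟩)
      simpa [cnt, Finset.sum_insert, Finset.mem_singleton, hne] using this
    have := List.one_le_count_iff.2 hj
    have := List.one_le_count_iff.2 hj'
    omega
  omega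

theorem cnt_update {w : ℕ} (Y : YState w) (j : Fin w) (l : List ℕ) (x : ℕ) :
    cnt (Function.update Y j l) x + (Y j).count x = cnt Y x + l.count x := by
  classical
  unfold cnt
  rw [← Finset.sum_erase_add Finset.univ _ (Finset.mem_univ j),
      ← Finset.sum_erase_add Finset.univ (fun k => (Y k).count x) (Finset.mem_univ j)]
  have h1 : ∀ k ∈ Finset.univ.erase j,
      ((Function.update Y j l) k).count x = (Y k).count x := by
    intro k hk
    rw [Function.update_of_ne (Finset.ne_of_mem_erase hk)]
  rw [Finset.sum_congr rfl h1, Function.update_self]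
  ring

end Eq1LB
namespace Eq1LB
open Classical

/-! ### The number of retrievals before time `u` -/

noncomputable def nret {w : ℕ} (mv : ℕ → BMove w) (u : ℕ) : ℕ :=
  ((Finset.range u).filter (fun v => ¬ ((mv v).isReshuffle = true))).card

theorem nret_zero {w : ℕ} (mv : ℕ → BMove w) : nret mv 0 = 0 := by
  simp [nret]

theorem nret_succ {w : ℕ} (mv : ℕ → BMove w) (u : ℕ) :
    nret mv (u + 1) = nret mv u + if (mv u).isReshuffle then 0 else 1 := by
  unfold nret
  rw [Finset.range_add_one, Finset.filter_insert]
  by_cases hres : (mv u).isReshuffle = true <;>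
    simp [hres, Finset.card_insert_of_notMem, Finset.notMem_range_self]

theorem nret_mono {w : ℕ} (mv : ℕ → BMove w) : Monotone (nret mv) := by
  intro a b hab
  exact Finset.card_le_card (Finset.filter_subset_filter _
    (Finset.range_subset_range.2 hab))

theorem nret_succ_of_retr {w : ℕ} {mv : ℕ → BMove w} {u : ℕ}
    (h : (mv u).isReshuffle = false) : nret mv (u + 1) = nret mv u + 1 := by
  rw [nret_succ, h]; simp

theorem nret_succ_of_resh {w : ℕ} {mv : ℕ → BMove w} {u : ℕ}
    (h : (mv u).isReshuffle = true) : nret mv (u + 1) = nret mv u := by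
  rw [nret_succ, h]; simp

/-! ### Step inversion lemmas -/

theorem step_resh {w h : ℕ} {Y Y' : YState w} {m : BMove w}
    (hst : RStep h Y m Y') (hres : m.isReshuffle = true) :
    ∃ s d x t r, m = .reshuffle s d ∧ Y s = x :: t ∧ d ≠ s ∧
      (Y d).length < h ∧ r ∈ t ∧ (∀ j, ∀ y ∈ Y j, r ≤ y) ∧
      Y' s = t ∧ Y' d = x :: Y d ∧ ∀ j, j ≠ s → j ≠ d → Y' j = Y j := by
  cases hst with
  | reshuffle src dst x t r hsrc hne hcap hr hmin =>
    refine ⟨src, dst, x, t, r, rfl, hsrc, hne.symm, hcap, hr, hmin, ?_, ?_, ?_⟩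
    · rw [Function.update_of_ne hne, Function.update_self]
    · rw [Function.update_self]
    · intro j hjs hjd
      rw [Function.update_of_ne hjd, Function.update_of_ne hjs]
  | retrieval => simp [BMove.isReshuffle] at hres

theorem step_retr {w h : ℕ} {Y Y' : YState w} {m : BMove w}
    (hst : RStep h Y m Y') (hres : m.isReshuffle = false) :
    ∃ s r t, m = .retrieval s ∧ Y s = r :: t ∧ (∀ j, ∀ y ∈ Y j, r ≤ y) ∧
      Y' s = t ∧ ∀ j, j ≠ s → Y' j = Y j := by
  cases hst with
  | reshuffle => simp [BMove.isReshuffle] at hres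
  | retrieval src r t hsrc hmin =>
    exact ⟨src, r, t, rfl, hsrc, hmin, Function.update_self _ _ _,
      fun j hj => Function.update_of_ne hj _ _⟩

/-! ### Run invariants -/

section Run

variable {w h n K : ℕ} {S : ℕ → YState w} {mv : ℕ → BMove w}

/-- The main state invariant: heights stay `≤ h` and the blocks present are
exactly `nret u + 1, …, n`, each once. -/
theorem run_inv (hstep : ∀ u < K, RStep h (S u) (mv u) (S (u + 1)))
    (hlen0 : ∀ j, (S 0 j).length ≤ h)
    (hcnt0 : ∀ x, cnt (S 0) x = if 1 ≤ x ∧ x ≤ n then 1 else 0) :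
    ∀ u, u ≤ K → (∀ j, (S u j).length ≤ h) ∧
      (∀ x, cnt (S u) x = if nret mv u + 1 ≤ x ∧ x ≤ n then 1 else 0) := by
  intro u
  induction u with
  | zero => intro _; exact ⟨hlen0, by simpa [nret_zero] using hcnt0⟩
  | succ u ih =>
    intro huK
    have huK' : u < K := huK
    obtain ⟨ihlen, ihcnt⟩ := ih (le_of_lt huK')
    have hst := hstep u huK'
    by_cases hres : (mv u).isReshuffle = true
    · obtain ⟨s, d, x, t, r, hm, hsrc, hds, hcap, hrt, hmin, hYs, hYd, hYo⟩ :=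
        step_resh hst hres
      constructor
      · intro j
        by_cases hjs : j = s
        · subst hjs; rw [hYs]
          have := ihlen j; rw [hsrc] at this; simp at this; omega
        · by_cases hjd : j = d
          · subst hjd; rw [hYd]; simpa using hcap
          · rw [hYo j hjs hjd]; exact ihlen j
      · intro z
        have key : cnt (S (u + 1)) z = cnt (S u) z := by
          have e1 : S (u + 1) =
              Function.update (Function.update (S u) s t) d (x :: S u d) := by
            funext j
            by_cases hjd : j = d
            · subst hjd; rw [hYd, Function.update_self]
            · rw [Function.update_of_ne hjd]
              by_cases hjs : j = s
              · subst hjs; rw [hYs, Function.update_self]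
              · rw [hYo j hjs hjd, Function.update_of_ne hjs]
          rw [e1]
          have h2 := cnt_update (Function.update (S u) s t) d (x :: S u d) z
          have h3 := cnt_update (S u) s t z
          rw [Function.update_of_ne hds] at h2
          rw [hsrc] at h3
          simp only [List.count_cons] at h2 h3 ⊢
          omega
        rw [key, nret_succ_of_resh hres]
        exact ihcnt z
    · have hres' : (mv u).isReshuffle = false := by
        simpa using hres
      obtain ⟨s, r, t, hm, hsrc, hmin, hYs, hYo⟩ := step_retr hst hres'
      have hrval : r = nret mv u + 1 := by
        have hrin : r ∈ S u s := by rw [hsrc]; exact List.mem_cons_self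
        have h1 := ihcnt r
        have h2 : 1 ≤ cnt (S u) r := cnt_pos_of_mem hrin
        have hr1 : nret mv u + 1 ≤ r ∧ r ≤ n := by
          by_contra hc; rw [if_neg hc] at h1; omega
        have h3 := ihcnt (nret mv u + 1)
        rw [if_pos ⟨le_refl _, le_trans hr1.1 hr1.2⟩] at h3
        obtain ⟨j, hj⟩ := exists_mem_of_cnt_pos (Y := S u) (x := nret mv u + 1) (by omega)
        have := hmin j _ hj
        omega
      have hupd : S (u + 1) = Function.update (S u) s t := by
        funext j
        by_cases hjs : j = s
        · subst hjs; rw [hYs, Function.update_self]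
        · rw [hYo j hjs, Function.update_of_ne hjs]
      constructor
      · intro j
        by_cases hjs : j = s
        · subst hjs; rw [hYs]
          have := ihlen j; rw [hsrc] at this; simp at this; omega
        · rw [hYo j hjs]; exact ihlen j
      · intro z
        have hrin : r ∈ S u s := by rw [hsrc]; exact List.mem_cons_self
        have hrn : r ≤ n := by
          have h2 := cnt_pos_of_mem hrin
          by_contra hc
          rw [ihcnt r, if_neg (fun hh => hc hh.2)] at h2; omega
        have h4 := cnt_update (S u) s t z
        rw [hsrc] at h4
        simp only [List.count_cons, beq_iff_eq] at h4
        have h5 := ihcnt z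
        rw [hupd, nret_succ_of_retr hres']
        by_cases hzr : z = r
        · have h5' : cnt (S u) z = 1 := by
            rw [h5, if_pos ⟨by omega, by omega⟩]
          rw [if_pos hzr.symm] at h4
          rw [if_neg (by omega)]
          omega
        · rw [if_neg (fun hh => hzr hh.symm)] at h4
          by_cases hcond : nret mv u + 1 + 1 ≤ z ∧ z ≤ n
          · rw [if_pos hcond]
            rw [if_pos ⟨by omega, hcond.2⟩] at h5
            omega
          · rw [if_neg hcond]
            rw [if_neg (by intro hh; exact hcond ⟨by omega, hh.2⟩)] at h5
            omega
end Run
end Eq1LB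
namespace Eq1LB
open Classical

/-- The block moved by a reshuffle (the head of the source stack). -/
def movedBlock {w : ℕ} (Y : YState w) : BMove w → Option ℕ
  | .reshuffle s _ => (Y s).head?
  | .retrieval _ => none

theorem movedBlock_isReshuffle {w : ℕ} {Y : YState w} {m : BMove w} {b : ℕ}
    (h : movedBlock Y m = some b) : m.isReshuffle = true := by
  cases m with
  | reshuffle s d => rfl
  | retrieval s => simp [movedBlock] at h

section Run

variable {w h n K : ℕ} {S : ℕ → YState w} {mv : ℕ → BMove w}

/-- crossing lemma -/
theorem nret_cross {i : ℕ} (hi1 : 1 ≤ i) (hiK : i ≤ nret mv K) :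
    ∃ u, u < K ∧ nret mv u = i - 1 ∧ nret mv (u + 1) = i := by
  classical
  set P : ℕ → Prop := fun u => nret mv u ≤ i - 1 with hP
  have hP0 : P 0 := by simp [hP, nret_zero]
  set u := Nat.findGreatest P K with hu
  have hPu : P u := Nat.findGreatest_spec (Nat.zero_le K) hP0
  have huK : u ≤ K := Nat.findGreatest_le K
  have huKlt : u < K := by
    rcases Nat.lt_or_ge u K with h' | h'
    · exact h'
    · exfalso
      have : u = K := le_antisymm huK h'
      rw [this] at hPu
      simp only [hP] at hPu
      omega
  have hnotP : ¬ P (u + 1) := Nat.findGreatest_is_greatest (Nat.lt_succ_self u) huKlt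
  have hstep1 : nret mv (u + 1) ≤ nret mv u + 1 := by
    rw [nret_succ]; split <;> omega
  simp only [hP] at hPu hnotP
  exact ⟨u, huKlt, by omega, by omega⟩

theorem nret_K_ge (hinv : ∀ u, u ≤ K → (∀ j, (S u j).length ≤ h) ∧
      (∀ x, cnt (S u) x = if nret mv u + 1 ≤ x ∧ x ≤ n then 1 else 0))
    (hend : ∀ j, S K j = []) : n ≤ nret mv K := by
  by_contra hc
  have h1 := (hinv K le_rfl).2 (nret mv K + 1)
  rw [if_pos ⟨le_rfl, by omega⟩] at h1
  have : cnt (S K) (nret mv K + 1) = 0 := by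
    unfold cnt
    exact Finset.sum_eq_zero (fun j _ => by rw [hend j]; rfl)
  omega

/-- The persistence lemma: a block `b` lying above a smaller block `m` must be
reshuffled at some later time. -/
theorem persist (hstep : ∀ u < K, RStep h (S u) (mv u) (S (u + 1)))
    (hinv : ∀ u, u ≤ K → (∀ j, (S u j).length ≤ h) ∧
      (∀ x, cnt (S u) x = if nret mv u + 1 ≤ x ∧ x ≤ n then 1 else 0))
    (hK : n ≤ nret mv K)
    {u0 : ℕ} (hu0 : u0 ≤ K) {j0 : Fin w} {b m : ℕ} (hmb : m < b)
    (hsub : [b, m].Sublist (S u0 j0)) :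
    ∃ u', u0 ≤ u' ∧ u' < K ∧ movedBlock (S u') (mv u') = some b := by
  have hmmem : m ∈ S u0 j0 := hsub.mem (by simp)
  have hm1 : nret mv u0 + 1 ≤ m ∧ m ≤ n := by
    have h1 := (hinv u0 hu0).2 m
    have h2 := cnt_pos_of_mem hmmem
    by_contra hc; rw [if_neg hc] at h1; omega
  obtain ⟨u1, hu1K, hn1, hn1'⟩ := nret_cross (mv := mv) (K := K) (i := m) (by omega) (by omega)
  have hu0u1 : u0 ≤ u1 := by
    by_contra hc
    have : u1 + 1 ≤ u0 := by omega
    have := nret_mono mv this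
    omega
  have hretr : (mv u1).isReshuffle = false := by
    by_contra hc
    have hc' : (mv u1).isReshuffle = true := by simpa using hc
    have := nret_succ_of_resh hc'
    omega
  -- the moving induction
  have main : ∀ k, u0 + k ≤ u1 →
      (∃ u', u0 ≤ u' ∧ u' < u1 ∧ movedBlock (S u') (mv u') = some b) ∨
      ∃ j, [b, m].Sublist (S (u0 + k) j) := by
    intro k
    induction k with
    | zero => intro _; exact Or.inr ⟨j0, hsub⟩
    | succ k ih =>
      intro hk1
      rcases ih (by omega) with hdone | ⟨j, hsubj⟩
      · exact Or.inl hdone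
      set u := u0 + k with hudef
      have huu1 : u < u1 := by omega
      have huK : u < K := by omega
      have hmmem' : m ∈ S u j := hsubj.mem (by simp)
      by_cases hres : (mv u).isReshuffle = true
      · obtain ⟨s, d, x, t, r, hm', hsrc, hds, hcap, hrt, hmin, hYs, hYd, hYo⟩ :=
          step_resh (hstep u huK) hres
        by_cases hxb : x = b
        · refine Or.inl ⟨u, by omega, huu1, ?_⟩
          rw [hm']
          simp only [movedBlock, hsrc, hxb, List.head?]
        · right
          by_cases hjs : j = s
          · subst hjs
            rw [hsrc] at hsubj
            refine ⟨j, ?_⟩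
            rw [show u0 + (k+1) = u + 1 by omega, hYs]
            exact sublist_of_cons hsubj (fun hb => hxb hb.symm)
          · by_cases hjd : j = d
            · subst hjd
              refine ⟨j, ?_⟩
              rw [show u0 + (k+1) = u + 1 by omega, hYd]
              exact hsubj.cons x
            · refine ⟨j, ?_⟩
              rw [show u0 + (k+1) = u + 1 by omega, hYo j hjs hjd]
              exact hsubj
      · have hres' : (mv u).isReshuffle = false := by simpa using hres
        obtain ⟨s, r, t, hm', hsrc, hmin, hYs, hYo⟩ := step_retr (hstep u huK) hres'
        have hrm : r ≤ m := hmin j m hmmem'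
        right
        by_cases hjs : j = s
        · subst hjs
          rw [hsrc] at hsubj
          refine ⟨j, ?_⟩
          rw [show u0 + (k+1) = u + 1 by omega, hYs]
          exact sublist_of_cons hsubj (by omega)
        · refine ⟨j, ?_⟩
          rw [show u0 + (k+1) = u + 1 by omega, hYo j hjs]
          exact hsubj
  rcases main (u1 - u0) (by omega) with ⟨u', h1, h2, h3⟩ | ⟨j, hsubj⟩
  · exact ⟨u', h1, by omega, h3⟩
  · exfalso
    rw [show u0 + (u1 - u0) = u1 by omega] at hsubj
    obtain ⟨s, r, t, hm', hsrc, hmin, hYs, hYo⟩ := step_retr (hstep u1 hu1K) hretr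
    have hmmem1 : m ∈ S u1 j := hsubj.mem (by simp)
    have hrm : r ≤ m := hmin j m hmmem1
    have hrm' : m ≤ r := by
      have h1 := (hinv u1 (le_of_lt hu1K)).2 r
      have h2 : r ∈ S u1 s := by rw [hsrc]; exact List.mem_cons_self
      have h3 := cnt_pos_of_mem h2
      by_contra hc; rw [if_neg (by omega)] at h1; omega
    have hrm2 : r = m := le_antisymm hrm hrm'
    subst hrm2
    have hcle : cnt (S u1) r ≤ 1 := by
      rw [(hinv u1 (le_of_lt hu1K)).2 r]; split <;> omega
    have hjs : j = s := stack_unique hcle hmmem1 (by rw [hsrc]; exact List.mem_cons_self)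
    subst hjs
    rw [hsrc] at hsubj
    have hsubt : [b, r].Sublist t := sublist_of_cons hsubj (by omega)
    have : r ∈ t := hsubt.mem (by simp)
    have h1 : 1 ≤ t.count r := List.one_le_count_iff.2 this
    have h2 : 2 ≤ (S u1 j).count r := by
      rw [hsrc, List.count_cons_self]
      omega
    have := count_le_cnt (S u1) r j
    omega

end Run
end Eq1LB
namespace Eq1LB
open Classical

section Run

variable {w h n K : ℕ} {S : ℕ → YState w} {mv : ℕ → BMove w}

/-- Analysis of phase `i`: between time `v0` (start of the phase, minimum present
block `i`) and time `u1` (the retrieval of `i`), the stack `s` holding `i` is popped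
one block at a time. -/
theorem phase (hstep : ∀ u < K, RStep h (S u) (mv u) (S (u + 1)))
    (hinv : ∀ u, u ≤ K → (∀ j, (S u j).length ≤ h) ∧
      (∀ x, cnt (S u) x = if nret mv u + 1 ≤ x ∧ x ≤ n then 1 else 0))
    {i v0 u1 : ℕ} (hi1 : 1 ≤ i) (hin : i ≤ n)
    (hu1K : u1 < K) (hv0u1 : v0 ≤ u1)
    (hnv0 : nret mv v0 = i - 1) (hnu1 : nret mv u1 = i - 1)
    (hretr : (mv u1).isReshuffle = false)
    {s : Fin w} {G R : List ℕ} (hsk : S v0 s = G ++ i :: R) :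
    u1 = v0 + G.length ∧
    S (u1 + 1) s = R ∧
    (∀ j, j ≠ s → ∀ k k', k ≤ k' → k' ≤ G.length + 1 →
      ∃ P, S (v0 + k') j = P ++ S (v0 + k) j) ∧
    (∀ k, (hk : k < G.length) → ∃ d, d ≠ s ∧ mv (v0 + k) = .reshuffle s d ∧
      movedBlock (S (v0 + k)) (mv (v0 + k)) = some (G.get ⟨k, hk⟩) ∧
      S (v0 + k + 1) d = G.get ⟨k, hk⟩ :: S (v0 + k) d ∧
      (∀ j, j ≠ s → j ≠ d → S (v0 + k + 1) j = S (v0 + k) j)) := by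
  -- minimum present block during the phase is i
  have hnwin : ∀ u, v0 ≤ u → u ≤ u1 → nret mv u = i - 1 := by
    intro u h1 h2
    have := nret_mono mv h1
    have := nret_mono mv h2
    omega
  have hcnt : ∀ u, v0 ≤ u → u ≤ u1 → ∀ x,
      cnt (S u) x = if i ≤ x ∧ x ≤ n then 1 else 0 := by
    intro u h1 h2 x
    have := (hinv u (by omega)).2 x
    rw [hnwin u h1 h2] at this
    rw [this]
    congr 1
    simp only [eq_iff_iff]
    omega
  have hresh : ∀ u, v0 ≤ u → u < u1 → (mv u).isReshuffle = true := by
    intro u h1 h2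
    by_contra hc
    have hc' : (mv u).isReshuffle = false := by simpa using hc
    have e1 := nret_succ_of_retr hc'
    have e2 := hnwin u h1 (by omega)
    have e3 : u + 1 ≤ u1 := by omega
    have := nret_mono mv e3
    omega
  -- if stack s has content G' ++ i :: R' at a time in the window, with G' ≠ [],
  -- then the step is a reshuffle popping the head of G'.
  have stepAt : ∀ u, v0 ≤ u → u ≤ u1 → ∀ g (G' R' : List ℕ),
      S u s = g :: (G' ++ i :: R') →
      u < u1 ∧ ∃ d, d ≠ s ∧ mv u = .reshuffle s d ∧
        S (u + 1) s = G' ++ i :: R' ∧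
        S (u + 1) d = g :: S u d ∧
        (∀ j, j ≠ s → j ≠ d → S (u + 1) j = S u j) := by
    intro u h1 h2 g G' R' hstk
    have huK : u < K := by omega
    have himem : i ∈ S u s := by rw [hstk]; simp
    have hcle : ∀ x, cnt (S u) x ≤ 1 := by
      intro x; rw [hcnt u h1 h2 x]; split <;> omega
    have hicount : (S u s).count i ≤ 1 :=
      le_trans (count_le_cnt (S u) i s) (hcle i)
    have hgi : g ≠ i := by
      intro hgi
      rw [hstk, hgi, List.count_cons_self] at hicount
      have : 1 ≤ (G' ++ i :: R').count i := List.one_le_count_iff.2 (by simp)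
      omega
    have hulu1 : u < u1 := by
      rcases Nat.lt_or_ge u u1 with h' | h'
      · exact h'
      · exfalso
        have huu1 : u = u1 := by omega
        subst huu1
        obtain ⟨s', r, t', hm', hsrc, hmin, hYs, hYo⟩ := step_retr (hstep u huK) hretr
        have hri : r = i := by
          have hr1 : r ≤ i := hmin s i himem
          have hr2 : i ≤ r := by
            have hp := cnt_pos_of_mem (show r ∈ S u s' by rw [hsrc]; simp)
            have := hcnt u h1 h2 r
            by_contra hc; rw [if_neg (by omega)] at this; omega
          omega
        subst hri
        have hss' : s = s' := stack_unique (hcle r) himem (by rw [hsrc]; simp)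
        rw [← hss'] at hsrc
        rw [hstk] at hsrc
        exact hgi (List.cons_eq_cons.mp hsrc).1
    refine ⟨hulu1, ?_⟩
    obtain ⟨s', d, x, t, r, hm', hsrc, hds, hcap, hrt, hmin, hYs, hYd, hYo⟩ :=
      step_resh (hstep u huK) (hresh u h1 hulu1)
    have hri : r = i := by
      have hr1 : r ≤ i := hmin s i himem
      have hr2 : i ≤ r := by
        have hp := cnt_pos_of_mem
          (show r ∈ S u s' by rw [hsrc]; exact List.mem_cons_of_mem _ hrt)
        have := hcnt u h1 h2 r
        by_contra hc; rw [if_neg (by omega)] at this; omega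
      omega
    subst hri
    have hss' : s = s' := stack_unique (hcle r) himem
      (by rw [hsrc]; exact List.mem_cons_of_mem _ hrt)
    subst hss'
    rw [hstk] at hsrc
    obtain ⟨hgx, hts⟩ := List.cons_eq_cons.mp hsrc
    refine ⟨d, hds, ?_, ?_, ?_, hYo⟩
    · rw [hm']
    · rw [hYs, ← hts]
    · rw [hYd, ← hgx]
  -- main induction: content of stack s after k pops
  have Φ : ∀ k, k ≤ G.length → v0 + k ≤ u1 ∧ S (v0 + k) s = G.drop k ++ i :: R := by
    intro k
    induction k with
    | zero => intro _; exact ⟨hv0u1, by simpa using hsk⟩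
    | succ k ih =>
      intro hk1
      obtain ⟨hle, hstk⟩ := ih (by omega)
      have hklen : k < G.length := by omega
      have hdrop : G.drop k = G.get ⟨k, hklen⟩ :: G.drop (k + 1) := by
        rw [List.drop_eq_getElem_cons hklen]; rfl
      rw [hdrop, List.cons_append] at hstk
      obtain ⟨hlt, d, hds, hm', hYs, hYd, hYo⟩ :=
        stepAt (v0 + k) (by omega) hle _ _ _ hstk
      exact ⟨by omega, by rw [show v0 + (k+1) = v0 + k + 1 by omega, hYs]⟩
  obtain ⟨hleG, hstkG⟩ := Φ G.length le_rfl
  simp only [List.drop_length, List.nil_append] at hstkG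
  -- u1 = v0 + G.length
  have hu1 : u1 = v0 + G.length := by
    rcases Nat.lt_or_ge (v0 + G.length) u1 with h' | h'
    · exfalso
      set u := v0 + G.length with hudef
      have huK : u < K := by omega
      obtain ⟨s', d, x, t, r, hm', hsrc, hds, hcap, hrt, hmin, hYs, hYd, hYo⟩ :=
        step_resh (hstep u huK) (hresh u (by omega) h')
      have himem : i ∈ S u s := by rw [hstkG]; simp
      have hcle : ∀ x, cnt (S u) x ≤ 1 := by
        intro x; rw [hcnt u (by omega) (by omega) x]; split <;> omega
      have hri : r = i := by
        have hr1 : r ≤ i := hmin s i himem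
        have hr2 : i ≤ r := by
          have hp := cnt_pos_of_mem
            (show r ∈ S u s' by rw [hsrc]; exact List.mem_cons_of_mem _ hrt)
          have := hcnt u (by omega) (by omega) r
          by_contra hc; rw [if_neg (by omega)] at this; omega
        omega
      subst hri
      have hss' : s = s' := stack_unique (hcle r) himem
        (by rw [hsrc]; exact List.mem_cons_of_mem _ hrt)
      rw [← hss', hstkG] at hsrc
      obtain ⟨hxr, htR⟩ := List.cons_eq_cons.mp hsrc
      have : 2 ≤ (S u s).count r := by
        rw [hstkG, List.count_cons_self]
        have : 1 ≤ R.count r := List.one_le_count_iff.2 (by rw [htR]; exact hrt)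
        omega
      have := count_le_cnt (S u) r s
      have := hcle r
      omega
    · omega
  -- retrieval at u1
  have hret : S (u1 + 1) s = R ∧ ∀ j, j ≠ s → S (u1 + 1) j = S u1 j := by
    obtain ⟨s', r, t', hm', hsrc, hmin, hYs, hYo⟩ := step_retr (hstep u1 hu1K) hretr
    have hstku1 : S u1 s = i :: R := by rw [hu1]; exact hstkG
    have hcle : ∀ x, cnt (S u1) x ≤ 1 := by
      intro x; rw [hcnt u1 hv0u1 le_rfl x]; split <;> omega
    have himem : i ∈ S u1 s := by rw [hstku1]; simp
    have hri : r = i := by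
      have hr1 : r ≤ i := hmin s i himem
      have hr2 : i ≤ r := by
        have hp := cnt_pos_of_mem (show r ∈ S u1 s' by rw [hsrc]; simp)
        have := hcnt u1 hv0u1 le_rfl r
        by_contra hc; rw [if_neg (by omega)] at this; omega
      omega
    subst hri
    have hss' : s = s' := stack_unique (hcle r) himem (by rw [hsrc]; simp)
    rw [← hss', hstku1] at hsrc
    have ht' : R = t' := (List.cons_eq_cons.mp hsrc).2
    rw [← hss'] at hYs
    exact ⟨by rw [hYs, ← ht'], fun j hj => by
      rw [hYo j (by rw [← hss']; exact hj)]⟩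
  -- per-step data
  have A5 : ∀ k, (hk : k < G.length) → ∃ d, d ≠ s ∧ mv (v0 + k) = .reshuffle s d ∧
      movedBlock (S (v0 + k)) (mv (v0 + k)) = some (G.get ⟨k, hk⟩) ∧
      S (v0 + k + 1) d = G.get ⟨k, hk⟩ :: S (v0 + k) d ∧
      (∀ j, j ≠ s → j ≠ d → S (v0 + k + 1) j = S (v0 + k) j) := by
    intro k hk
    obtain ⟨hle, hstk⟩ := Φ k (by omega)
    have hdrop : G.drop k = G.get ⟨k, hk⟩ :: G.drop (k + 1) := by
      rw [List.drop_eq_getElem_cons hk]; rfl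
    rw [hdrop, List.cons_append] at hstk
    obtain ⟨hlt, d, hds, hm', hYs, hYd, hYo⟩ := stepAt (v0 + k) (by omega) hle _ _ _ hstk
    refine ⟨d, hds, hm', ?_, hYd, hYo⟩
    rw [hm']
    simp only [movedBlock, hstk, List.head?]
  -- extension of other stacks
  have ext1 : ∀ k, k ≤ G.length → ∀ j, j ≠ s →
      ∃ P, S (v0 + k + 1) j = P ++ S (v0 + k) j := by
    intro k hkle j hjs
    rcases Nat.lt_or_ge k G.length with hk | hk
    · obtain ⟨d, hds, hm', hmb, hYd, hYo⟩ := A5 k hk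
      by_cases hjd : j = d
      · subst hjd
        exact ⟨[G.get ⟨k, hk⟩], by rw [hYd]; rfl⟩
      · exact ⟨[], by rw [hYo j hjs hjd]; rfl⟩
    · have hkeq : k = G.length := by omega
      subst hkeq
      refine ⟨[], ?_⟩
      rw [show v0 + G.length = u1 from hu1.symm]
      rw [hret.2 j hjs]
      rfl
  have A3 : ∀ j, j ≠ s → ∀ k k', k ≤ k' → k' ≤ G.length + 1 →
      ∃ P, S (v0 + k') j = P ++ S (v0 + k) j := by
    intro j hjs k k' hkk' hk'le
    induction k' with
    | zero =>
      have : k = 0 := by omega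
      subst this
      exact ⟨[], rfl⟩
    | succ k' ih =>
      rcases Nat.lt_or_ge k' k with h' | h'
      · have : k = k' + 1 := by omega
        subst this
        exact ⟨[], rfl⟩
      · obtain ⟨P1, hP1⟩ := ih h' (by omega)
        obtain ⟨P2, hP2⟩ := ext1 k' (by omega) j hjs
        exact ⟨P2 ++ P1, by
          rw [show v0 + (k' + 1) = v0 + k' + 1 by omega, hP2, hP1, List.append_assoc]⟩
  exact ⟨hu1, hret.1, A3, A5⟩

end Run
end Eq1LB
namespace Eq1LB
open Classical

/-! ### peel lemmas -/

theorem peel_of_not_mem {w : ℕ} {Y : YState w} {i : ℕ} {j : Fin w} (h : i ∉ Y j) :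
    peel Y i j = Y j := by
  simp [peel, h]

theorem aboveList_of_not_mem {w : ℕ} {Y : YState w} {i : ℕ} {j : Fin w} (h : i ∉ Y j) :
    aboveList Y i j = [] := by
  simp [aboveList, h]

theorem peel_split {w : ℕ} {Y : YState w} {i : ℕ} {j : Fin w} (h : i ∈ Y j) :
    Y j = aboveList Y i j ++ i :: peel Y i j := by
  simp only [peel, aboveList, if_pos h]
  exact split_at_mem (Y j) h

theorem peel_suffix {w : ℕ} (Y : YState w) (i : ℕ) (j : Fin w) :
    peel Y i j <:+ Y j := by
  unfold peel
  split
  · exact List.drop_suffix _ _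
  · exact List.suffix_refl _

theorem peelSeq_suffix {w : ℕ} (S0 : YState w) {i i' : ℕ} (hii' : i ≤ i') (j : Fin w) :
    peelSeq S0 i' j <:+ peelSeq S0 i j := by
  induction i' with
  | zero =>
    have : i = 0 := by omega
    subst this; exact List.suffix_refl _
  | succ i' ih =>
    rcases Nat.lt_or_ge i (i' + 1) with h' | h'
    · exact List.IsSuffix.trans (peel_suffix _ _ _) (ih (by omega))
    · have : i = i' + 1 := by omega
      subst this; exact List.suffix_refl _

theorem aboveList_subset {w : ℕ} (Y : YState w) (i : ℕ) (j : Fin w) :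
    ∀ b ∈ aboveList Y i j, b ∈ Y j := by
  intro b hb
  unfold aboveList at hb
  split at hb
  · exact (List.takeWhile_sublist _).mem hb
  · simp at hb

/-! ### counting utilities -/

theorem sum_toFinset_fin (f : ℕ → ℕ) : ∀ {l : List ℕ}, l.Nodup →
    ∑ b ∈ l.toFinset, f b = ∑ p : Fin l.length, f (l.get p)
  | [], _ => by simp
  | a :: l, hl => by
    have hnd := (List.nodup_cons.mp hl)
    rw [List.toFinset_cons, Finset.sum_insert (by simpa using hnd.1),
      sum_toFinset_fin f hnd.2]
    simp only [List.length_cons, Fin.sum_univ_succ]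
    rfl

theorem list_filter_length (p : ℕ → Bool) (K : ℕ) :
    ((List.range K).filter p).length = ((Finset.range K).filter (fun u => p u = true)).card := by
  induction K with
  | zero => simp
  | succ K ih =>
    rw [List.range_succ, List.filter_append, List.length_append, Finset.range_add_one,
      Finset.filter_insert]
    by_cases hp : p K = true
    · rw [if_pos hp, Finset.card_insert_of_notMem (fun hc => by
        have := Finset.mem_of_mem_filter K hc
        simp at this)]
      simp [hp, ih]
    · rw [if_neg hp]
      simp only [List.filter_cons, List.filter_nil]
      have : p K = false := by simpa using hp
      simp [this, ih]

end Eq1LB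

namespace Eq1LB
open Classical

/-- Number of reshuffles of block `b` during the run. -/
noncomputable def resCount {w : ℕ} (S : ℕ → YState w) (mv : ℕ → BMove w) (K b : ℕ) : ℕ :=
  ((Finset.range K).filter (fun u => movedBlock (S u) (mv u) = some b)).card

end Eq1LB

open Eq1LB in
theorem eq1_lower_bound_valid' {w h n K : ℕ} (hw : 0 < w) (S0 : YState w)
    (hyard : IsYard h n S0) (t : ℕ → Fin w)
    (ht : ∀ i, 1 ≤ i → i ≤ n → ∀ j, i ∈ peelSeq S0 (i - 1) j → j = t i)
    (S : ℕ → YState w) (mv : ℕ → BMove w) (hS0 : S 0 = S0)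
    (hstep : ∀ u < K, RStep h (S u) (mv u) (S (u + 1)))
    (hend : ∀ j, S K j = []) :
    ∑ i ∈ Finset.Icc 1 n,
        ((aboveList (peelSeq S0 (i - 1)) i (t i)).length +
          GstarVal h n (peelSeq S0 i) (Finset.univ.erase (t i))
            (aboveList (peelSeq S0 (i - 1)) i (t i))) ≤
      ((List.range K).filter fun u => (mv u).isReshuffle).length := by
  classical
  set L : ℕ → List ℕ := fun i => aboveList (peelSeq S0 (i - 1)) i (t i) with hLdef
  have hlen0 : ∀ j, (S 0 j).length ≤ h := by rw [hS0]; exact hyard.1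
  have hcnt0 : ∀ x, cnt (S 0) x = if 1 ≤ x ∧ x ≤ n then 1 else 0 := by
    intro x
    have h1 := hyard.2 x
    simp only [Finset.mem_Icc] at h1
    rw [hS0]
    exact h1
  have hinv := run_inv hstep hlen0 hcnt0
  have hK : n ≤ nret mv K := nret_K_ge hinv hend
  have hcle : ∀ u, u ≤ K → ∀ x, cnt (S u) x ≤ 1 := fun u hu x => by
    rw [(hinv u hu).2 x]; split <;> omega
  have hnods : ∀ u, u ≤ K → ∀ j, (S u j).Nodup := by
    intro u hu j
    rw [List.nodup_iff_count_le_one]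
    intro x
    exact le_trans (count_le_cnt (S u) x j) (hcle u hu x)
  have hxle : ∀ u, u ≤ K → ∀ j, ∀ x ∈ S u j, 1 ≤ x ∧ x ≤ n := by
    intro u hu j x hx
    have h1 := (hinv u hu).2 x
    have h2 := cnt_pos_of_mem hx
    by_cases hc : nret mv u + 1 ≤ x ∧ x ≤ n
    · omega
    · rw [if_neg hc] at h1; omega
  -- retrieval times
  have hex : ∀ i : ℕ, ∃ u, 1 ≤ i → i ≤ n →
      u < K ∧ nret mv u = i - 1 ∧ nret mv (u + 1) = i := by
    intro i
    by_cases hi : 1 ≤ i ∧ i ≤ n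
    · obtain ⟨u, h1, h2, h3⟩ := nret_cross (mv := mv) (K := K) hi.1 (le_trans hi.2 hK)
      exact ⟨u, fun _ _ => ⟨h1, h2, h3⟩⟩
    · exact ⟨0, fun h1 h2 => absurd ⟨h1, h2⟩ hi⟩
  choose tau htau using hex
  set v : ℕ → ℕ := fun i => if i = 0 then 0 else tau i + 1 with hvdef
  have hvspec : ∀ i, i ≤ n → v i ≤ K ∧ nret mv (v i) = i := by
    intro i hi
    by_cases h0 : i = 0
    · subst h0
      simp [hvdef, nret_zero]
    · obtain ⟨hK', h2, h3⟩ := htau i (by omega) hi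
      simp only [hvdef, if_neg h0]
      exact ⟨by omega, h3⟩
  have hvsucc : ∀ i : ℕ, v (i + 1) = tau (i + 1) + 1 := by
    intro i; simp [hvdef]
  have hvtau : ∀ i, i + 1 ≤ n → v i ≤ tau (i + 1) := by
    intro i h2
    obtain ⟨hK', htn, htn'⟩ := htau (i + 1) (by omega) h2
    have hvn := hvspec i (by omega)
    by_contra hc
    have h3 : tau (i + 1) + 1 ≤ v i := by omega
    have := nret_mono mv h3
    simp only [Nat.add_sub_cancel] at htn
    omega
  have hretrtau : ∀ i, 1 ≤ i → i ≤ n → (mv (tau i)).isReshuffle = false := by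
    intro i h1 h2
    obtain ⟨hK', htn, htn'⟩ := htau i h1 h2
    by_contra hc
    have hc' : (mv (tau i)).isReshuffle = true := by simpa using hc
    have := nret_succ_of_resh hc'
    omega
  -- the main induction
  have MAIN : ∀ i, i ≤ n →
      (∀ j, peelSeq S0 i j <:+ S (v i) j) ∧
      (1 ≤ i →
        ((L i).length +
            GstarVal h n (peelSeq S0 i) (Finset.univ.erase (t i)) (L i) ≤
          ∑ b ∈ (L i).toFinset, resCount S mv K b) ∧
        ∀ b ∈ L i, ∀ j, b ∉ peelSeq S0 i j) := by
    intro i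
    induction i with
    | zero =>
      intro _
      refine ⟨fun j => ?_, by omega⟩
      show peelSeq S0 0 j <:+ S (v 0) j
      have : v 0 = 0 := by simp [hvdef]
      rw [this, hS0]
      exact List.suffix_refl _
    | succ i ih =>
      intro hi'
      obtain ⟨hsuf, _⟩ := ih (by omega)
      have hvK : v i ≤ K := (hvspec i (by omega)).1
      have hnvi : nret mv (v i) = i := (hvspec i (by omega)).2
      obtain ⟨hTK, hTn, hTn'⟩ := htau (i + 1) (by omega) hi'
      simp only [Nat.add_sub_cancel] at hTn
      have hvle : v i ≤ tau (i + 1) := hvtau i hi'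
      have hretr' := hretrtau (i + 1) (by omega) hi'
      have hvK' : v (i + 1) ≤ K := (hvspec (i + 1) hi').1
      have hvs : v (i + 1) = tau (i + 1) + 1 := hvsucc i
      have hLi : L (i + 1) = aboveList (peelSeq S0 i) (i + 1) (t (i + 1)) := by
        simp [hLdef]
      by_cases hpres : ∃ j0, (i + 1) ∈ peelSeq S0 i j0
      · obtain ⟨j0, hj0⟩ := hpres
        have hj0t : j0 = t (i + 1) := ht (i + 1) (by omega) hi' j0 (by
          simpa [Nat.add_sub_cancel] using hj0)
        subst hj0t
        set s := t (i + 1) with hsdef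
        have hsplit : peelSeq S0 i s = L (i + 1) ++ (i + 1) :: peelSeq S0 (i + 1) s := by
          rw [hLi]
          exact peel_split hj0
        obtain ⟨E, hE⟩ := hsuf s
        have hstack : S (v i) s = (E ++ L (i + 1)) ++ (i + 1) ::
            peelSeq S0 (i + 1) s := by
          rw [← hE, hsplit, List.append_assoc]
        obtain ⟨htau1, hSfin, hext, hA5⟩ := phase hstep hinv (by omega) hi' hTK hvle
          (by omega) (by omega) hretr' hstack
        set G := E ++ L (i + 1) with hGdef
        have hGlen : G.length = E.length + (L (i + 1)).length := by
          simp [hGdef]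
        have hnotmem : ∀ j, j ≠ s → (i + 1) ∉ peelSeq S0 i j := by
          intro j hjne hmem
          have h1 : (i + 1) ∈ S (v i) j := (hsuf j).sublist.mem hmem
          have h2 : (i + 1) ∈ S (v i) s := (hsuf s).sublist.mem hj0
          exact hjne (stack_unique (hcle (v i) hvK (i + 1)) h1 h2)
        have hMeq : ∀ j, j ≠ s → peelSeq S0 (i + 1) j = peelSeq S0 i j :=
          fun j hj => peel_of_not_mem (hnotmem j hj)
        have hsuf' : ∀ j, peelSeq S0 (i + 1) j <:+ S (v (i + 1)) j := by
          intro j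
          by_cases hj : j = s
          · subst hj
            rw [hvs, hSfin]
          · obtain ⟨P, hP⟩ := hext j hj 0 (G.length + 1) (by omega) le_rfl
            rw [show v i + (G.length + 1) = v (i + 1) by omega] at hP
            rw [show v i + 0 = v i by omega] at hP
            rw [hMeq j hj]
            obtain ⟨Q, hQ⟩ := hsuf j
            exact ⟨P ++ Q, by rw [List.append_assoc, hQ, hP]⟩
        have hLnd : (L (i + 1)).Nodup := by
          have h1 : (L (i + 1)).Sublist (S (v i) s) := by
            have h2 : (L (i + 1)).Sublist (peelSeq S0 i s) := by
              rw [hsplit]; exact List.sublist_append_left _ _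
            exact h2.trans (hsuf s).sublist
          exact List.Nodup.sublist h1 (hnods (v i) hvK s)
        have hLmem : ∀ b ∈ L (i + 1), b ∈ S (v i) s := by
          intro b hb
          apply (hsuf s).sublist.mem
          rw [hsplit]
          exact List.mem_append_left _ hb
        choose d hd1 hd2 hd3 hd4 hd5 using hA5
        have hplt : ∀ p : Fin (L (i + 1)).length, E.length + ↑p < G.length := by
          intro p; have := p.isLt; omega
        set a : Fin (L (i + 1)).length → Fin w :=
          fun p => d (E.length + ↑p) (hplt p) with hadef
        have hgetG : ∀ p : Fin (L (i + 1)).length,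
            G.get ⟨E.length + ↑p, hplt p⟩ = (L (i + 1)).get p := by
          intro p
          have h0 : ∀ (hh : E.length + ↑p < (E ++ L (i + 1)).length),
              (E ++ L (i + 1)).get ⟨E.length + ↑p, hh⟩ = (L (i + 1)).get p := by
            intro hh
            have h1 : (E ++ L (i + 1)).get ⟨E.length + ↑p, hh⟩ =
                (E ++ L (i + 1))[E.length + ↑p]'hh := rfl
            have h2 : (L (i + 1)).get p = (L (i + 1))[(p : ℕ)]'p.isLt := rfl
            rw [h1, h2, List.getElem_append_right (by omega)]
            congr 1
            omega
          exact h0 _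
        have hwpK : ∀ p : Fin (L (i + 1)).length,
            v i + (E.length + ↑p) < tau (i + 1) := by
          intro p; have := hplt p; omega
        have hmoved : ∀ p : Fin (L (i + 1)).length,
            movedBlock (S (v i + (E.length + ↑p))) (mv (v i + (E.length + ↑p))) =
              some ((L (i + 1)).get p) := by
          intro p
          have h1 := hd3 (E.length + ↑p) (hplt p)
          rwa [hgetG p] at h1
        have hpush : ∀ p : Fin (L (i + 1)).length,
            S (v i + (E.length + ↑p) + 1) (a p) =
              (L (i + 1)).get p :: S (v i + (E.length + ↑p)) (a p) := by
          intro p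
          have h1 := hd4 (E.length + ↑p) (hplt p)
          rwa [hgetG p] at h1
        have hanes : ∀ p, a p ≠ s := fun p => hd1 _ _
        have hble : ∀ b ∈ L (i + 1), b ≤ n := fun b hb =>
          (hxle (v i) hvK s b (hLmem b hb)).2
        have hmem_after : ∀ p : Fin (L (i + 1)).length, ∀ k',
            E.length + ↑p + 1 ≤ k' → k' ≤ G.length + 1 →
            (L (i + 1)).get p ∈ S (v i + k') (a p) := by
          intro p k' h1 h2
          obtain ⟨P, hP⟩ := hext (a p) (hanes p) (E.length + ↑p + 1) k' h1 h2
          rw [show v i + (E.length + ↑p + 1) = v i + (E.length + ↑p) + 1 by omega,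
            hpush p] at hP
          rw [hP]
          exact List.mem_append_right _ (List.mem_cons_self)
        have hold : ∀ j, j ≠ s → ∀ k', k' ≤ G.length + 1 →
            ∀ x ∈ S (v i) j, x ∈ S (v i + k') j := by
          intro j hj k' h2 x hx
          obtain ⟨P, hP⟩ := hext j hj 0 k' (by omega) h2
          rw [show v i + 0 = v i by omega] at hP
          rw [hP]
          exact List.mem_append_right _ hx
        have hcap : ∀ j ∈ Finset.univ.erase s,
            (Finset.univ.filter fun p : Fin (L (i + 1)).length => a p = j).card ≤
              h - (peelSeq S0 (i + 1) j).length := by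
          intro j hj
          have hjs : j ≠ s := (Finset.mem_erase.mp hj).1
          set F := Finset.univ.filter (fun p : Fin (L (i + 1)).length => a p = j) with hF
          have hgetinj : Function.Injective (L (i + 1)).get :=
            List.nodup_iff_injective_get.mp hLnd
          have hcard1 : (F.image fun p => (L (i + 1)).get p).card = F.card :=
            Finset.card_image_of_injective F hgetinj
          have hnodupv : (S (v (i + 1)) j).Nodup := hnods (v (i + 1)) hvK' j
          have hMnd : (peelSeq S0 (i + 1) j).Nodup :=
            List.Nodup.sublist (hsuf' j).sublist hnodupv
          have hsub1 : (F.image fun p => (L (i + 1)).get p) ∪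
              (peelSeq S0 (i + 1) j).toFinset ⊆ (S (v (i + 1)) j).toFinset := by
            intro x hx
            rcases Finset.mem_union.mp hx with hx | hx
            · obtain ⟨p, hp1, hp2⟩ := Finset.mem_image.mp hx
              have hpj : a p = j := (Finset.mem_filter.mp hp1).2
              rw [List.mem_toFinset, ← hp2, ← hpj]
              have h3 := hmem_after p (G.length + 1) (by have := hplt p; omega) le_rfl
              rwa [show v i + (G.length + 1) = v (i + 1) by omega] at h3
            · rw [List.mem_toFinset] at hx ⊢
              exact (hsuf' j).sublist.mem hx
          have hdisj2 : Disjoint (F.image fun p => (L (i + 1)).get p)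
              (peelSeq S0 (i + 1) j).toFinset := by
            rw [Finset.disjoint_left]
            intro x hx1 hx2
            obtain ⟨p, hp1, hp2⟩ := Finset.mem_image.mp hx1
            rw [List.mem_toFinset] at hx2
            have hx3 : x ∈ S (v i) j := by
              rw [hMeq j hjs] at hx2
              exact (hsuf j).sublist.mem hx2
            have hx4 : x ∈ S (v i) s := hLmem x (by rw [← hp2]; exact List.get_mem _ _)
            exact hjs (stack_unique (hcle (v i) hvK x) hx3 hx4)
          have hcard2 : F.card + (peelSeq S0 (i + 1) j).length ≤
              (S (v (i + 1)) j).length := by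
            have h1 := Finset.card_le_card hsub1
            rw [Finset.card_union_of_disjoint hdisj2, hcard1,
              List.toFinset_card_of_nodup hMnd, List.toFinset_card_of_nodup hnodupv] at h1
            exact h1
          have h2 := (hinv (v (i + 1)) hvK').1 j
          omega
        have hGle : GstarVal h n (peelSeq S0 (i + 1)) (Finset.univ.erase s) (L (i + 1)) ≤
            placeBlockingCount n (peelSeq S0 (i + 1)) (L (i + 1)) a := by
          apply Nat.sInf_le
          exact ⟨a, fun p => Finset.mem_erase.mpr ⟨hanes p, Finset.mem_univ _⟩, hcap, rfl⟩
        have hresge : ∀ p : Fin (L (i + 1)).length,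
            1 + (if (sigmaVal n (peelSeq S0 (i + 1) (a p)) < (L (i + 1)).get p ∨
              ∃ q, q < p ∧ a q = a p ∧ (L (i + 1)).get q < (L (i + 1)).get p)
              then 1 else 0) ≤
            resCount S mv K ((L (i + 1)).get p) := by
          intro p
          have hwltK : v i + (E.length + ↑p) < K := by
            have := hwpK p; omega
          have hev1 : v i + (E.length + ↑p) ∈ (Finset.range K).filter
              (fun u => movedBlock (S u) (mv u) = some ((L (i + 1)).get p)) :=
            Finset.mem_filter.mpr ⟨Finset.mem_range.mpr hwltK, hmoved p⟩
          by_cases hblk : sigmaVal n (peelSeq S0 (i + 1) (a p)) < (L (i + 1)).get p ∨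
              ∃ q, q < p ∧ a q = a p ∧ (L (i + 1)).get q < (L (i + 1)).get p
          · rw [if_pos hblk]
            have hmain : ∃ m, m < (L (i + 1)).get p ∧
                m ∈ S (v i + (E.length + ↑p)) (a p) := by
              rcases hblk with hsig | ⟨q, hq1, hq2, hq3⟩
              · have hbn : (L (i + 1)).get p ≤ n + 1 := by
                  have := hble ((L (i + 1)).get p) (List.get_mem (L (i + 1)) p)
                  omega
                obtain ⟨m, hm1, hm2⟩ := sigma_lt hbn hsig
                refine ⟨m, hm2, ?_⟩
                have hmv : m ∈ S (v i) (a p) := by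
                  rw [hMeq (a p) (hanes p)] at hm1
                  exact (hsuf (a p)).sublist.mem hm1
                exact hold (a p) (hanes p) (E.length + ↑p) (by omega) m hmv
              · refine ⟨(L (i + 1)).get q, hq3, ?_⟩
                have h4 := hmem_after q (E.length + ↑p)
                  (by have : (q : ℕ) < (p : ℕ) := hq1; omega)
                  (by have := hplt p; omega)
                rwa [hq2] at h4
            obtain ⟨m, hmb, hmmem⟩ := hmain
            have hsubm : [(L (i + 1)).get p, m].Sublist
                (S (v i + (E.length + ↑p) + 1) (a p)) := by
              rw [hpush p]
              exact List.cons_sublist_cons.mpr (List.singleton_sublist.mpr hmmem)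
            obtain ⟨u', hu1', hu2', hu3'⟩ := persist hstep hinv hK
              (show v i + (E.length + ↑p) + 1 ≤ K by omega) hmb hsubm
            have hev2 : u' ∈ (Finset.range K).filter
                (fun u => movedBlock (S u) (mv u) = some ((L (i + 1)).get p)) :=
              Finset.mem_filter.mpr ⟨Finset.mem_range.mpr hu2', hu3'⟩
            have h5 : 1 < ((Finset.range K).filter
                (fun u => movedBlock (S u) (mv u) = some ((L (i + 1)).get p))).card :=
              Finset.one_lt_card.mpr ⟨_, hev1, u', hev2, by omega⟩
            show 1 + 1 ≤ resCount S mv K ((L (i + 1)).get p)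
            unfold resCount
            omega
          · rw [if_neg hblk]
            have h5 : 0 < ((Finset.range K).filter
                (fun u => movedBlock (S u) (mv u) = some ((L (i + 1)).get p))).card :=
              Finset.card_pos.mpr ⟨_, hev1⟩
            show 1 + 0 ≤ resCount S mv K ((L (i + 1)).get p)
            unfold resCount
            omega
        have hsum : (L (i + 1)).length +
            placeBlockingCount n (peelSeq S0 (i + 1)) (L (i + 1)) a ≤
            ∑ b ∈ (L (i + 1)).toFinset, resCount S mv K b := by
          rw [sum_toFinset_fin _ hLnd]
          have h1 : ∑ p : Fin (L (i + 1)).length,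
              (1 + (if (sigmaVal n (peelSeq S0 (i + 1) (a p)) < (L (i + 1)).get p ∨
                ∃ q, q < p ∧ a q = a p ∧ (L (i + 1)).get q < (L (i + 1)).get p)
                then 1 else 0)) ≤
              ∑ p : Fin (L (i + 1)).length, resCount S mv K ((L (i + 1)).get p) :=
            Finset.sum_le_sum (fun p _ => hresge p)
          have h2 : ∑ p : Fin (L (i + 1)).length,
              (1 + (if (sigmaVal n (peelSeq S0 (i + 1) (a p)) < (L (i + 1)).get p ∨
                ∃ q, q < p ∧ a q = a p ∧ (L (i + 1)).get q < (L (i + 1)).get p)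
                then 1 else 0)) =
              (L (i + 1)).length +
                placeBlockingCount n (peelSeq S0 (i + 1)) (L (i + 1)) a := by
            rw [Finset.sum_add_distrib, Finset.sum_const, smul_eq_mul, mul_one,
              Finset.card_univ, Fintype.card_fin]
            congr 1
            rw [placeBlockingCount, Finset.card_filter]
          omega
        have hnotin : ∀ b ∈ L (i + 1), ∀ j, b ∉ peelSeq S0 (i + 1) j := by
          intro b hb j hbj
          by_cases hj : j = s
          · subst hj
            have hcount : 2 ≤ (peelSeq S0 i s).count b := by
              rw [hsplit, List.count_append]
              have h1 : 1 ≤ (L (i + 1)).count b := List.one_le_count_iff.mpr hb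
              have h2 : 1 ≤ ((i + 1) :: peelSeq S0 (i + 1) s).count b :=
                List.one_le_count_iff.mpr (List.mem_cons_of_mem _ hbj)
              omega
            have hcount2 : (peelSeq S0 i s).count b ≤ (S (v i) s).count b :=
              (hsuf s).sublist.count_le b
            have h3 := count_le_cnt (S (v i)) b s
            have h4 := hcle (v i) hvK b
            omega
          · have h1 : b ∈ S (v i) j := by
              rw [hMeq j hj] at hbj
              exact (hsuf j).sublist.mem hbj
            have h2 : b ∈ S (v i) s := hLmem b hb
            exact hj (stack_unique (hcle (v i) hvK b) h1 h2)
        exact ⟨hsuf', fun _ => ⟨by omega, hnotin⟩⟩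
      · push_neg at hpres
        have hM1 : ∀ j, peelSeq S0 (i + 1) j = peelSeq S0 i j := fun j =>
          peel_of_not_mem (hpres j)
        have hLnil : L (i + 1) = [] := by
          rw [hLi]; exact aboveList_of_not_mem (hpres (t (i + 1)))
        have hc1 : cnt (S (v i)) (i + 1) = 1 := by
          rw [(hinv (v i) hvK).2 (i + 1), hnvi, if_pos ⟨by omega, hi'⟩]
        obtain ⟨j0, hj0⟩ := exists_mem_of_cnt_pos (Y := S (v i)) (x := i + 1) (by omega)
        obtain ⟨E, hE⟩ := hsuf j0
        have hiE : (i + 1) ∈ E := by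
          rcases List.mem_append.mp (by rw [hE]; exact hj0) with h' | h'
          · exact h'
          · exact absurd h' (hpres j0)
        obtain ⟨A, B, hAB⟩ := List.append_of_mem hiE
        have hstack : S (v i) j0 = A ++ (i + 1) :: (B ++ peelSeq S0 i j0) := by
          rw [← hE, hAB]
          simp [List.append_assoc]
        obtain ⟨htau1, hSfin, hext, _⟩ := phase hstep hinv (by omega) hi' hTK hvle
          (by omega) (by omega) hretr' hstack
        refine ⟨?_, fun _ => ⟨?_, ?_⟩⟩
        · intro j
          by_cases hj : j = j0
          · subst hj
            rw [hvs, hSfin, hM1 j]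
            exact List.suffix_append _ _
          · obtain ⟨P, hP⟩ := hext j hj 0 (A.length + 1) (by omega) (by omega)
            rw [show v i + (A.length + 1) = v (i + 1) by omega] at hP
            rw [show v i + 0 = v i by omega] at hP
            rw [hM1 j]
            obtain ⟨Q, hQ⟩ := hsuf j
            exact ⟨P ++ Q, by rw [List.append_assoc, hQ, hP]⟩
        · rw [hLnil]
          simp only [List.length_nil, List.toFinset_nil, Finset.sum_empty, Nat.zero_add]
          apply Nat.sInf_le
          refine ⟨fun p => p.elim0, fun p => p.elim0, fun j hj => by simp, by
            simp [placeBlockingCount]⟩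
        · rw [hLnil]
          intro b hb
          simp at hb

  -- assembling the final bound
  have hdisjaux : ∀ i1 i2, 1 ≤ i1 → i1 < i2 → i2 ≤ n →
      ∀ b, b ∈ L i1 → b ∈ L i2 → False := by
    intro i1 i2 h1 h2 h3 b hb1 hb2
    have hb2' : b ∈ peelSeq S0 (i2 - 1) (t i2) := aboveList_subset _ _ _ b hb2
    have hmono := (peelSeq_suffix S0 (show i1 ≤ i2 - 1 by omega) (t i2)).sublist.mem hb2'
    exact ((MAIN i1 (by omega)).2 h1).2 b hb1 (t i2) hmono
  have hdisjL : ∀ i1 ∈ Finset.Icc 1 n, ∀ i2 ∈ Finset.Icc 1 n, i1 ≠ i2 →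
      Disjoint (L i1).toFinset (L i2).toFinset := by
    intro i1 hi1 i2 hi2 hne
    simp only [Finset.mem_Icc] at hi1 hi2
    rw [Finset.disjoint_left]
    intro b hb1 hb2
    simp only [List.mem_toFinset] at hb1 hb2
    rcases Nat.lt_or_ge i1 i2 with h' | h'
    · exact hdisjaux i1 i2 hi1.1 h' hi2.2 b hb1 hb2
    · exact hdisjaux i2 i1 hi2.1 (by omega) hi1.2 b hb2 hb1
  have step1 : ∑ i ∈ Finset.Icc 1 n,
      ((L i).length + GstarVal h n (peelSeq S0 i) (Finset.univ.erase (t i)) (L i)) ≤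
      ∑ i ∈ Finset.Icc 1 n, ∑ b ∈ (L i).toFinset, resCount S mv K b := by
    refine Finset.sum_le_sum (fun i hi => ?_)
    simp only [Finset.mem_Icc] at hi
    exact ((MAIN i hi.2).2 hi.1).1
  have step2 : ∑ i ∈ Finset.Icc 1 n, ∑ b ∈ (L i).toFinset, resCount S mv K b =
      ∑ b ∈ (Finset.Icc 1 n).biUnion (fun i => (L i).toFinset), resCount S mv K b := by
    exact (Finset.sum_biUnion (fun i1 hi1 i2 hi2 hne => hdisjL i1 hi1 i2 hi2 hne)).symm
  have step3 : ∑ b ∈ (Finset.Icc 1 n).biUnion (fun i => (L i).toFinset),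
      resCount S mv K b ≤
      ((Finset.range K).filter (fun u => (mv u).isReshuffle = true)).card := by
    set B := (Finset.Icc 1 n).biUnion (fun i => (L i).toFinset)
    have hdis : ∀ b1 ∈ B, ∀ b2 ∈ B, b1 ≠ b2 →
        Disjoint ((Finset.range K).filter
          (fun u => movedBlock (S u) (mv u) = some b1))
          ((Finset.range K).filter
          (fun u => movedBlock (S u) (mv u) = some b2)) := by
      intro b1 _ b2 _ hne
      rw [Finset.disjoint_left]
      intro u hu1 hu2
      simp only [Finset.mem_filter] at hu1 hu2
      rw [hu1.2] at hu2
      exact hne (by injection hu2.2)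
    have hcb : ∑ b ∈ B, resCount S mv K b =
        (B.biUnion (fun b => (Finset.range K).filter
          (fun u => movedBlock (S u) (mv u) = some b))).card := by
      rw [Finset.card_biUnion hdis]
      rfl
    rw [hcb]
    apply Finset.card_le_card
    intro u hu
    simp only [Finset.mem_biUnion, Finset.mem_filter] at hu ⊢
    obtain ⟨b, _, hu1, hu2⟩ := hu
    exact ⟨hu1, movedBlock_isReshuffle hu2⟩
  have hshow : (∑ i ∈ Finset.Icc 1 n,
        ((aboveList (peelSeq S0 (i - 1)) i (t i)).length +
          GstarVal h n (peelSeq S0 i) (Finset.univ.erase (t i))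
            (aboveList (peelSeq S0 (i - 1)) i (t i)))) =
      ∑ i ∈ Finset.Icc 1 n,
        ((L i).length + GstarVal h n (peelSeq S0 i) (Finset.univ.erase (t i)) (L i)) := rfl
  rw [hshow, list_filter_length (fun u => (mv u).isReshuffle) K]
  omega


/-- (Validity of the lower bound of equation (1).)
Let `M^i = peelSeq S0 i` be the peeling sequence of the yard `S0`, `t i` the stack of
block `i` in `M^(i-1)` (whenever present), `L i = aboveList (M^(i-1)) i (t i)` the blocks
above `i` listed top to bottom, and `M̃^i` the yard `M^i` with stack `t i` deleted.
If for each `i` a capacity-feasible placement of `L i` into `M̃^i` exists, then every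
feasible solution of the **restricted** BRP for `S0` uses at least
`∑ i (|B i| + G*(M̃^i, B i, φ i))` reshuffle moves. -/
theorem eq1_lower_bound_valid {w h n K : ℕ} (hw : 0 < w) (S0 : YState w)
    (hyard : IsYard h n S0) (t : ℕ → Fin w)
    (ht : ∀ i, 1 ≤ i → i ≤ n → ∀ j, i ∈ peelSeq S0 (i - 1) j → j = t i)
    (hfeas : ∀ i ∈ Finset.Icc 1 n,
      ∃ a : Fin (aboveList (peelSeq S0 (i - 1)) i (t i)).length → Fin w,
        (∀ p, a p ∈ Finset.univ.erase (t i)) ∧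
        ∀ j ∈ Finset.univ.erase (t i),
          (Finset.univ.filter fun p => a p = j).card ≤ h - (peelSeq S0 i j).length)
    (S : ℕ → YState w) (mv : ℕ → BMove w) (hS0 : S 0 = S0)
    (hstep : ∀ u < K, RStep h (S u) (mv u) (S (u + 1)))
    (hend : ∀ j, S K j = []) :
    ∑ i ∈ Finset.Icc 1 n,
        ((aboveList (peelSeq S0 (i - 1)) i (t i)).length +
          GstarVal h n (peelSeq S0 i) (Finset.univ.erase (t i))
            (aboveList (peelSeq S0 (i - 1)) i (t i))) ≤
      ((List.range K).filter fun u => (mv u).isReshuffle).length :=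
  eq1_lower_bound_valid' hw S0 hyard t ht S mv hS0 hstep hend
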